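/- Let G : Δᵈ → [0, ∞) be continuous with G(μ(0)) > 0, and suppose the trading strategy φ generated additively by G* = G/G(μ(0)) has wealth V(t) = G*(μ(t)) + Γ^{G*}(t), where Γ^{G*} is nondecreasing with Γ^{G*}(0) = 0. If P(Γ^G(T*) > G(μ(0))) = 1 for some T* > 0, then V(0) = 1, V(·) ≥ 0, and P(V(T) > 1) = 1 for every T ≥ T*; i.e., φ is a strong relative arbitrage with respect to the market over [0, T] for all T ≥ T*. -/

import Mathlib

open MeasureTheory

/-- Strong relative arbitrage over sufficiently long horizons: if `G ≥ 0` on the simplex,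
`G(μ(0)) > 0`, `Γ^G` is nondecreasing with `Γ^G(0) = 0`, and
`P(Γ^G(T*) > G(μ(0))) = 1`, then the wealth `V(t) = G*(μ(t)) + Γ^{G*}(t)` (with
`G* = G/G(μ(0))`, `Γ^{G*} = Γ^G/G(μ(0))`) of the additively generated strategy satisfies
`V(0) = 1`, `V ≥ 0` on `[0,∞)`, and `P(V(T) > 1) = 1` for every `T ≥ T*`. -/
theorem stmt19 {Ω : Type*} [MeasurableSpace Ω] (P : Measure Ω) [IsProbabilityMeasure P]
    (d : ℕ) (G : (Fin d → ℝ) → ℝ)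
    (μ : ℝ → Ω → Fin d → ℝ) (μ0 : Fin d → ℝ)
    (hμ0 : ∀ ω, μ 0 ω = μ0)
    (hsimplex : ∀ t ω, (∀ i, μ t ω i ∈ Set.Icc (0 : ℝ) 1) ∧ ∑ i, μ t ω i = 1)
    (hGnn : ∀ x : Fin d → ℝ, ((∀ i, x i ∈ Set.Icc (0 : ℝ) 1) ∧ ∑ i, x i = 1) → 0 ≤ G x)
    (hG0 : 0 < G μ0)
    (Γ : ℝ → Ω → ℝ)
    (hΓ0 : ∀ ω, Γ 0 ω = 0)
    (hΓmono : ∀ ω, Monotone (fun t => Γ t ω))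
    (Tstar : ℝ) (hTstar : 0 < Tstar)
    (hkey : ∀ᵐ ω ∂P, G μ0 < Γ Tstar ω) :
    (∀ ω, G (μ 0 ω) / G μ0 + Γ 0 ω / G μ0 = 1) ∧
    (∀ t, 0 ≤ t → ∀ ω, 0 ≤ G (μ t ω) / G μ0 + Γ t ω / G μ0) ∧
    (∀ T, Tstar ≤ T → ∀ᵐ ω ∂P, 1 < G (μ T ω) / G μ0 + Γ T ω / G μ0) := by
  refine ⟨fun ω => ?_, fun t ht ω => ?_, fun T hT => ?_⟩
  · rw [hμ0, hΓ0]
    field_simp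
    ring
  · have h1 : 0 ≤ G (μ t ω) := hGnn _ (hsimplex t ω)
    have h2 : 0 ≤ Γ t ω := (hΓ0 ω) ▸ hΓmono ω ht
    positivity
  · filter_upwards [hkey] with ω hω
    have h1 : 0 ≤ G (μ T ω) := hGnn _ (hsimplex T ω)
    have h2 : G μ0 < Γ T ω := lt_of_lt_of_le hω (hΓmono ω hT)
    have : 1 < Γ T ω / G μ0 := (one_lt_div hG0).mpr h2
    have h3 : 0 ≤ G (μ T ω) / G μ0 := div_nonneg h1 hG0.le
    linarith
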